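/- The exponential map is the left inverse of the logarithmic map: for any two distinct points x, y ∈ ℍⁿ_K, the vector log_x(y) is a nonzero element of T_x and exp_x(log_x(y)) = y. -/

import Mathlib

open scoped BigOperators

/-- The Lorentz (Minkowski) inner product on `ℝ^{n+1}`:
`⟨x,y⟩_L = -x₀y₀ + Σ_{i=1}^n xᵢyᵢ`. -/
noncomputable def lorentz {n : ℕ} (x y : Fin (n + 1) → ℝ) : ℝ :=
  -(x 0 * y 0) + ∑ i : Fin n, x i.succ * y i.succ

/-- Membership in the hyperboloid model `ℍⁿ_K` of curvature `K < 0`. -/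
def onHyperboloid {n : ℕ} (K : ℝ) (x : Fin (n + 1) → ℝ) : Prop :=
  lorentz x x = 1 / K ∧ 0 < x 0

/-- The Lorentz norm `‖u‖_L = √⟨u,u⟩_L` (for vectors with `⟨u,u⟩_L ≥ 0`). -/
noncomputable def lnorm {n : ℕ} (u : Fin (n + 1) → ℝ) : ℝ :=
  Real.sqrt (lorentz u u)

/-- The inverse hyperbolic cosine `arccosh x = log (x + √(x² - 1))`. -/
noncomputable def arcosh (x : ℝ) : ℝ :=
  Real.log (x + Real.sqrt (x ^ 2 - 1))

/-- The exponential map of the hyperboloid with generalized radius `R`: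
`exp_x(v) = cosh(‖v‖_L/R)·x + sinh(‖v‖_L/R)·(R/‖v‖_L)·v`. -/
noncomputable def expMap {n : ℕ} (R : ℝ) (x v : Fin (n + 1) → ℝ) : Fin (n + 1) → ℝ :=
  Real.cosh (lnorm v / R) • x + (Real.sinh (lnorm v / R) * (R / lnorm v)) • v

/-- The logarithmic map of the hyperboloid of curvature `K`:
`log_x(y) = (arccosh α / √(α² − 1))·(y − αx)` with `α = K⟨x,y⟩_L`. -/
noncomputable def logMap {n : ℕ} (K : ℝ) (x y : Fin (n + 1) → ℝ) : Fin (n + 1) → ℝ :=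
  (arcosh (K * lorentz x y) / Real.sqrt ((K * lorentz x y) ^ 2 - 1)) •
    (y - (K * lorentz x y) • x)

/-- The hyperbolic distance `d(x,y) = R·arccosh(K⟨x,y⟩_L)`. -/
noncomputable def hdist {n : ℕ} (K R : ℝ) (x y : Fin (n + 1) → ℝ) : ℝ :=
  R * arcosh (K * lorentz x y)

/-- Parallel transport from `x` to `y` on the hyperboloid of generalized radius `R`:
`PT_{x→y}(v) = v + (⟨y,v⟩_L/(R² − ⟨x,y⟩_L))·(x+y)`. -/
noncomputable def pt {n : ℕ} (R : ℝ) (x y v : Fin (n + 1) → ℝ) : Fin (n + 1) → ℝ :=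
  v + (lorentz y v / (R ^ 2 - lorentz x y)) • (x + y)

/-- The origin `o = (R, 0, …, 0)` of the hyperboloid. -/
noncomputable def origin {n : ℕ} (R : ℝ) : Fin (n + 1) → ℝ :=
  fun i => if i = 0 then R else 0

section helpers

lemma lorentz_symm {n : ℕ} (x y : Fin (n + 1) → ℝ) : lorentz x y = lorentz y x := by
  simp [lorentz, mul_comm]

lemma lorentz_smul_left {n : ℕ} (a : ℝ) (u v : Fin (n + 1) → ℝ) :
    lorentz (a • u) v = a * lorentz u v := by
  simp [lorentz, Finset.mul_sum, mul_add, mul_assoc]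

lemma lorentz_smul_right {n : ℕ} (a : ℝ) (u v : Fin (n + 1) → ℝ) :
    lorentz u (a • v) = a * lorentz u v := by
  rw [lorentz_symm, lorentz_smul_left, lorentz_symm]

lemma lorentz_sub_left {n : ℕ} (u w v : Fin (n + 1) → ℝ) :
    lorentz (u - w) v = lorentz u v - lorentz w v := by
  simp [lorentz, sub_mul, Finset.sum_sub_distrib]
  ring

lemma lorentz_sub_right {n : ℕ} (u w v : Fin (n + 1) → ℝ) :
    lorentz v (u - w) = lorentz v u - lorentz v w := by
  rw [lorentz_symm, lorentz_sub_left, lorentz_symm u v, lorentz_symm w v]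

lemma lorentz_expand {n : ℕ} (a : ℝ) (x y : Fin (n + 1) → ℝ) :
    lorentz (y - a • x) (y - a • x)
      = lorentz y y - 2 * a * lorentz x y + a ^ 2 * lorentz x x := by
  rw [lorentz_sub_left, lorentz_sub_right, lorentz_sub_right, lorentz_smul_left,
    lorentz_smul_right, lorentz_smul_left, lorentz_smul_right, lorentz_symm y x]
  ring

/-- A nonzero vector Lorentz-orthogonal to a point of the hyperboloid is spacelike. -/
lemma tangent_spacelike {n : ℕ} {K : ℝ} (hK : K < 0) {x z : Fin (n + 1) → ℝ}
    (hx : onHyperboloid K x) (hz : lorentz x z = 0) :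
    0 ≤ lorentz z z ∧ (lorentz z z = 0 → z = 0) := by
  obtain ⟨hxx, hx0⟩ := hx
  have hxx' : -(x 0 * x 0) + ∑ i : Fin n, x i.succ * x i.succ = 1 / K := hxx
  have hz' : -(x 0 * z 0) + ∑ i : Fin n, x i.succ * z i.succ = 0 := hz
  set A := ∑ i : Fin n, x i.succ ^ 2 with hA
  set W := ∑ i : Fin n, z i.succ ^ 2 with hW
  have hAe : ∑ i : Fin n, x i.succ * x i.succ = A := by simp [hA, sq]
  have hWe : ∑ i : Fin n, z i.succ * z i.succ = W := by simp [hW, sq]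
  have hWnn : 0 ≤ W := Finset.sum_nonneg fun i _ => sq_nonneg _
  have hKneg : 1 / K < 0 := by
    exact div_neg_of_pos_of_neg one_pos hK
  have hAlt : A < x 0 ^ 2 := by
    rw [hAe] at hxx'; nlinarith
  have hsum : ∑ i : Fin n, x i.succ * z i.succ = x 0 * z 0 := by linarith
  have hcs : (∑ i : Fin n, x i.succ * z i.succ) ^ 2 ≤ A * W :=
    Finset.sum_mul_sq_le_sq_mul_sq _ _ _
  rw [hsum] at hcs
  have hz0 : z 0 ^ 2 ≤ W := by
    nlinarith [mul_le_mul_of_nonneg_right hAlt.le hWnn, mul_pos hx0 hx0]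
  have hll : lorentz z z = -(z 0 * z 0) + W := by rw [lorentz, hWe]
  constructor
  · rw [hll]; nlinarith
  · intro h0
    rw [hll] at h0
    have hWz : W = 0 := by nlinarith
    have hzsucc : ∀ i : Fin n, z i.succ = 0 := by
      intro i
      have := (Finset.sum_eq_zero_iff_of_nonneg
        (fun i _ => sq_nonneg (z i.succ))).1 hWz i (Finset.mem_univ i)
      exact pow_eq_zero_iff (by norm_num) |>.1 this
    have hz00 : z 0 = 0 := by nlinarith
    funext i
    refine Fin.cases ?_ ?_ i
    · exact hz00
    · intro j; exact hzsucc j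

end helpers

/-- the exponential map is the left inverse of the logarithmic
map: for distinct `x, y ∈ ℍⁿ_K`, `log_x(y)` is a nonzero element of `T_x`
and `exp_x(log_x(y)) = y`. -/
theorem expMap_logMap {n : ℕ} (K R : ℝ) (hK : K < 0)
    (hR : R = 1 / Real.sqrt (-K))
    (x y : Fin (n + 1) → ℝ) (hx : onHyperboloid K x) (hy : onHyperboloid K y)
    (hxy : x ≠ y) :
    lorentz (logMap K x y) x = 0 ∧ logMap K x y ≠ 0 ∧
    expMap R x (logMap K x y) = y := by
  have hK0 : K ≠ 0 := ne_of_lt hK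
  obtain ⟨hxx, hx0⟩ := hx
  obtain ⟨hyy, hy0⟩ := hy
  set α : ℝ := K * lorentz x y with hα
  set z : Fin (n + 1) → ℝ := y - α • x with hzdef
  set θ : ℝ := arcosh α with hθdef
  set s : ℝ := Real.sqrt (α ^ 2 - 1) with hsdef
  have hv : logMap K x y = (θ / s) • z := by
    rw [logMap, ← hα]
  -- x is orthogonal to z
  have hxz : lorentz x z = 0 := by
    rw [hzdef, lorentz_sub_right, lorentz_smul_right, hxx, hα]
    field_simp
    ring
  -- squared norm of z
  have hzz : lorentz z z = (α ^ 2 - 1) * (-(1 / K)) := by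
    rw [hzdef, lorentz_expand, hxx, hyy, hα]
    field_simp
    ring
  -- spatial Cauchy-Schwarz gives lorentz x y < 0
  have hxy_neg : lorentz x y < 0 := by
    have hxx' : -(x 0 * x 0) + ∑ i : Fin n, x i.succ * x i.succ = 1 / K := hxx
    have hyy' : -(y 0 * y 0) + ∑ i : Fin n, y i.succ * y i.succ = 1 / K := hyy
    have hKneg : 1 / K < 0 := div_neg_of_pos_of_neg one_pos hK
    have hAe : ∑ i : Fin n, x i.succ * x i.succ = ∑ i : Fin n, x i.succ ^ 2 := by
      simp [sq]
    have hBe : ∑ i : Fin n, y i.succ * y i.succ = ∑ i : Fin n, y i.succ ^ 2 := by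
      simp [sq]
    set A := ∑ i : Fin n, x i.succ ^ 2 with hA
    set B := ∑ i : Fin n, y i.succ ^ 2 with hB
    have hAnn : 0 ≤ A := Finset.sum_nonneg fun i _ => sq_nonneg _
    have hBnn : 0 ≤ B := Finset.sum_nonneg fun i _ => sq_nonneg _
    have hAlt : A < x 0 ^ 2 := by rw [hAe] at hxx'; nlinarith
    have hBlt : B < y 0 ^ 2 := by rw [hBe] at hyy'; nlinarith
    have hcs : (∑ i : Fin n, x i.succ * y i.succ) ^ 2 ≤ A * B :=
      Finset.sum_mul_sq_le_sq_mul_sq _ _ _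
    have hprod : A * B < (x 0 * y 0) ^ 2 := by
      have := mul_lt_mul'' hAlt hBlt hAnn hBnn
      nlinarith
    have hlt : ∑ i : Fin n, x i.succ * y i.succ < x 0 * y 0 := by
      have h2 : (∑ i : Fin n, x i.succ * y i.succ) ^ 2 < (x 0 * y 0) ^ 2 :=
        lt_of_le_of_lt hcs hprod
      have h3 : 0 ≤ x 0 * y 0 := le_of_lt (mul_pos hx0 hy0)
      exact lt_of_pow_lt_pow_left₀ 2 h3 h2
    have : lorentz x y = -(x 0 * y 0) + ∑ i : Fin n, x i.succ * y i.succ := rfl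
    rw [this]; linarith
  have hαpos : 0 < α := mul_pos_of_neg_of_neg hK hxy_neg
  -- z is spacelike, so α² ≥ 1
  have hts := tangent_spacelike hK ⟨hxx, hx0⟩ hxz
  have hα2 : 1 ≤ α ^ 2 := by
    have h1 : 0 < -(1 / K) := by
      have := div_neg_of_pos_of_neg one_pos hK
      linarith
    nlinarith [hts.1, hzz]
  have hα1 : 1 < α := by
    rcases lt_or_eq_of_le (show 1 ≤ α by nlinarith) with h | h
    · exact h
    · exfalso
      have hz0 : z = 0 := hts.2 (by rw [hzz, ← h]; ring)
      have : y = x := by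
        have := sub_eq_zero.mp hz0
        rw [this, ← h, one_smul]
      exact hxy this.symm
  have hα2pos : 0 < α ^ 2 - 1 := by nlinarith
  have hspos : 0 < s := Real.sqrt_pos.mpr hα2pos
  have hs2 : s ^ 2 = α ^ 2 - 1 := Real.sq_sqrt hα2pos.le
  have ht1 : 1 < α + s := by linarith
  have htpos : 0 < α + s := by linarith
  have hθpos : 0 < θ := by
    rw [hθdef, arcosh, ← hsdef]
    exact Real.log_pos ht1
  have hinv : (α + s)⁻¹ = α - s := by
    refine inv_eq_of_mul_eq_one_right ?_
    linear_combination -hs2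
  have hcosh : Real.cosh θ = α := by
    rw [hθdef, arcosh, ← hsdef, Real.cosh_log htpos, hinv]; ring
  have hsinh : Real.sinh θ = s := by
    rw [hθdef, arcosh, ← hsdef, Real.sinh_log htpos, hinv]; ring
  -- radius facts
  have hKpos : 0 < -K := by linarith
  have hRpos : 0 < R := by
    rw [hR]; positivity
  have hR2 : R ^ 2 = -(1 / K) := by
    rw [hR, div_pow, Real.sq_sqrt hKpos.le]
    field_simp
  -- norm of log
  have hzzpos : 0 < lorentz z z := by
    rw [hzz]
    have h1 : 0 < -(1 / K) := by
      have := div_neg_of_pos_of_neg one_pos hK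
      linarith
    exact mul_pos hα2pos h1
  have hvv : lorentz (logMap K x y) (logMap K x y) = (θ * R) ^ 2 := by
    rw [hv, lorentz_smul_left, lorentz_smul_right, hzz, ← hs2, ← hR2]
    field_simp
  have hlv : lnorm (logMap K x y) = θ * R := by
    rw [lnorm, hvv, Real.sqrt_sq (by positivity)]
  have hne : logMap K x y ≠ 0 := by
    rw [hv]
    intro h
    rcases smul_eq_zero.mp h with h | h
    · exact absurd h (by positivity)
    · rw [h] at hzzpos
      simp [lorentz] at hzzpos
  refine ⟨?_, hne, ?_⟩
  · rw [hv, lorentz_smul_left, lorentz_symm z x, hxz, mul_zero]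
  · rw [expMap, hlv, mul_div_assoc, div_self (ne_of_gt hRpos), mul_one, hcosh, hsinh,
      hv, smul_smul]
    have hcoef : s * (R / (θ * R)) * (θ / s) = 1 := by
      field_simp
    rw [hcoef, one_smul, hzdef]
    abel
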